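/- arXiv:2009.10457 — 2 statements merged into one kernel-verified Lean document; each statement's English description precedes it below -/
import Mathlib

section
/- Let γ: (0,1] → (0,∞) be a continuous non-decreasing function with lim_{c→0+} γ(c) = 0. Then there exists a C¹ function g: [0,1] → [0,1] with g(0)=0, g'(0)=0, g strictly increasing on [0,1], g'(c) > 0 for c ∈ (0,1], g(c) ≤ γ(c) and g'(c) ≤ γ(c) for all c ∈ (0, 1/8), and g(c) = c for c ∈ [1/2, 1]. -/
open Set Filter Topology

/-- clamp to [0,1] -/
noncomputable def sclamp (x : ℝ) : ℝ := max 0 (min x 1)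

/-- C¹ smoothstep -/
noncomputable def s3 (x : ℝ) : ℝ := (sclamp x)^2 * (3 - 2 * sclamp x)

/-- derivative of the smoothstep -/
noncomputable def sd3 (x : ℝ) : ℝ := 6 * sclamp x * (1 - sclamp x)

lemma sclamp_nonneg (x : ℝ) : 0 ≤ sclamp x := le_max_left _ _

lemma sclamp_le_one (x : ℝ) : sclamp x ≤ 1 := max_le (by norm_num) (min_le_right _ _)

lemma sclamp_of_nonpos {x : ℝ} (hx : x ≤ 0) : sclamp x = 0 :=
  max_eq_left (le_trans (min_le_left _ _) hx)

lemma sclamp_of_one_le {x : ℝ} (hx : 1 ≤ x) : sclamp x = 1 := by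
  rw [sclamp, min_eq_right hx, max_eq_right zero_le_one]

lemma sclamp_of_mem {x : ℝ} (h0 : 0 ≤ x) (h1 : x ≤ 1) : sclamp x = x := by
  rw [sclamp, min_eq_left h1, max_eq_right h0]

lemma s3_of_nonpos {x : ℝ} (hx : x ≤ 0) : s3 x = 0 := by
  rw [s3, sclamp_of_nonpos hx]; ring

lemma s3_of_one_le {x : ℝ} (hx : 1 ≤ x) : s3 x = 1 := by
  rw [s3, sclamp_of_one_le hx]; ring

lemma s3_nonneg (x : ℝ) : 0 ≤ s3 x := by
  have h0 := sclamp_nonneg x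
  have h1 := sclamp_le_one x
  rw [s3]; nlinarith

lemma s3_le_one (x : ℝ) : s3 x ≤ 1 := by
  have h0 := sclamp_nonneg x
  have h1 := sclamp_le_one x
  rw [s3]; nlinarith [sq_nonneg (1 - sclamp x)]

lemma sd3_nonneg (x : ℝ) : 0 ≤ sd3 x := by
  have h0 := sclamp_nonneg x
  have h1 := sclamp_le_one x
  rw [sd3]; nlinarith

lemma sd3_of_nonpos {x : ℝ} (hx : x ≤ 0) : sd3 x = 0 := by
  rw [sd3, sclamp_of_nonpos hx]; ring

lemma sd3_of_one_le {x : ℝ} (hx : 1 ≤ x) : sd3 x = 1 * 0 := by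
  rw [sd3, sclamp_of_one_le hx]; ring

lemma continuous_sclamp : Continuous sclamp := by
  unfold sclamp; fun_prop

lemma continuous_s3 : Continuous s3 := by
  unfold s3 sclamp; fun_prop

lemma continuous_sd3 : Continuous sd3 := by
  unfold sd3 sclamp; fun_prop

lemma abs_s3_sub_le_zero (y : ℝ) : |s3 y - s3 0| ≤ 3 * (y - 0)^2 := by
  rw [s3_of_nonpos le_rfl, sub_zero, sub_zero]
  rcases le_or_gt y 0 with hy | hy
  · rw [s3_of_nonpos hy]; simp only [abs_zero, sub_zero]; positivity
  · rcases le_or_gt 1 y with hy1 | hy1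
    · rw [s3_of_one_le hy1, abs_one]; nlinarith
    · rw [s3, sclamp_of_mem hy.le hy1.le, abs_of_nonneg (by nlinarith)]
      nlinarith

lemma abs_s3_sub_le_one (y : ℝ) : |s3 y - s3 1| ≤ 5 * (y - 1)^2 := by
  rw [s3_of_one_le le_rfl]
  rcases le_or_gt 1 y with hy1 | hy1
  · rw [s3_of_one_le hy1]; simp; positivity
  · rcases le_or_gt y 0 with hy | hy
    · rw [s3_of_nonpos hy]; rw [zero_sub, abs_neg, abs_one]; nlinarith
    · rw [s3, sclamp_of_mem hy.le hy1.le,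
        abs_of_nonpos (by nlinarith [mul_nonneg (sq_nonneg (1 - y)) (by linarith : (0:ℝ) ≤ 2*y+1)])]
      nlinarith [mul_nonneg (sq_nonneg (1 - y)) (by linarith : (0:ℝ) ≤ 4 - 2*y)]

lemma slope_bound {f : ℝ → ℝ} {a C : ℝ} (hC : 0 ≤ C)
    (h : ∀ y, |f y - f a| ≤ C * (y - a)^2) (y : ℝ) :
    ‖slope f a y‖ ≤ C * |y - a| := by
  rcases eq_or_ne y a with rfl | hya
  · simp [slope_same]
  · have hne : y - a ≠ 0 := sub_ne_zero.2 hya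
    rw [slope_def_field, Real.norm_eq_abs, abs_div, div_le_iff₀ (abs_pos.2 hne)]
    exact (h y).trans_eq (by rw [← sq_abs]; ring)

lemma hasDerivAt_s3 (x : ℝ) : HasDerivAt s3 (sd3 x) x := by
  rcases lt_trichotomy x 0 with hx | rfl | hx
  · rw [sd3_of_nonpos hx.le]
    have : s3 =ᶠ[nhds x] fun _ => (0:ℝ) := by
      filter_upwards [Iio_mem_nhds hx] with y hy
      exact s3_of_nonpos (le_of_lt hy)
    exact (hasDerivAt_const x (0:ℝ)).congr_of_eventuallyEq this
  · rw [hasDerivAt_iff_tendsto_slope, sd3_of_nonpos le_rfl]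
    apply squeeze_zero_norm (slope_bound (by norm_num) abs_s3_sub_le_zero)
    have : Tendsto (fun y : ℝ => 3 * |y - 0|) (nhds 0) (nhds (3 * |(0:ℝ) - 0|)) :=
      ((by fun_prop : Continuous fun y : ℝ => 3 * |y - 0|)).tendsto 0
    simpa using this.mono_left nhdsWithin_le_nhds
  · rcases lt_trichotomy x 1 with hx1 | rfl | hx1
    · have hd : HasDerivAt (fun y : ℝ => 3 * y^2 - 2 * y^3)
          (3 * (2 * x ^ 1) - 2 * (3 * x ^ 2)) x :=
        ((hasDerivAt_pow 2 x).const_mul 3).sub ((hasDerivAt_pow 3 x).const_mul 2)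
      have heq : s3 =ᶠ[nhds x] fun y : ℝ => 3 * y^2 - 2 * y^3 := by
        filter_upwards [Ioo_mem_nhds hx hx1] with y hy
        rw [s3, sclamp_of_mem hy.1.le hy.2.le]; ring
      have h2 := hd.congr_of_eventuallyEq heq
      refine h2.congr_deriv ?_
      unfold sd3
      rw [sclamp_of_mem hx.le hx1.le]; ring
    · rw [hasDerivAt_iff_tendsto_slope]
      have h1 : sd3 1 = 0 := by rw [sd3_of_one_le le_rfl]; ring
      rw [h1]
      apply squeeze_zero_norm (slope_bound (by norm_num) abs_s3_sub_le_one)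
      have : Tendsto (fun y : ℝ => 5 * |y - 1|) (nhds 1) (nhds (5 * |(1:ℝ) - 1|)) :=
        ((by fun_prop : Continuous fun y : ℝ => 5 * |y - 1|)).tendsto 1
      simpa using this.mono_left nhdsWithin_le_nhds
    · rw [sd3_of_one_le hx1.le]
      have : s3 =ᶠ[nhds x] fun _ => (1:ℝ) := by
        filter_upwards [Ioi_mem_nhds hx1] with y hy
        exact s3_of_one_le (le_of_lt hy)
      simpa using (hasDerivAt_const x (1:ℝ)).congr_of_eventuallyEq this

/-- The small derivative function built from γ. -/
noncomputable def hfun (γ : ℝ → ℝ) (t : ℝ) : ℝ := max 0 (min (γ (min t (1/8))) t)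

/-- Its antiderivative. -/
noncomputable def Gfun (γ : ℝ → ℝ) (c : ℝ) : ℝ := ∫ t in (0:ℝ)..c, hfun γ t

/-- The smoothing function. -/
noncomputable def gfun (γ : ℝ → ℝ) (c : ℝ) : ℝ :=
  Gfun γ c + (c - Gfun γ c) * s3 (8 * (c - 1/4))

/-- Its derivative. -/
noncomputable def Dgfun (γ : ℝ → ℝ) (c : ℝ) : ℝ :=
  hfun γ c + (1 - hfun γ c) * s3 (8 * (c - 1/4)) +
    (c - Gfun γ c) * (sd3 (8 * (c - 1/4)) * 8)

lemma hfun_nonneg (γ : ℝ → ℝ) (t : ℝ) : 0 ≤ hfun γ t := le_max_left _ _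

lemma hfun_le_max (γ : ℝ → ℝ) (t : ℝ) : hfun γ t ≤ max 0 t :=
  max_le_max le_rfl (min_le_right _ _)

lemma hfun_of_nonpos (γ : ℝ → ℝ) {t : ℝ} (ht : t ≤ 0) : hfun γ t = 0 :=
  max_eq_left (le_trans (min_le_right _ _) ht)

lemma hfun_pos {γ : ℝ → ℝ} (hγpos : ∀ c ∈ Ioc (0 : ℝ) 1, 0 < γ c)
    {t : ℝ} (ht : 0 < t) : 0 < hfun γ t := by
  have hmem : min t (1/8) ∈ Ioc (0:ℝ) 1 := by
    constructor
    · exact lt_min ht (by norm_num)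
    · exact le_trans (min_le_right _ _) (by norm_num)
  exact lt_max_of_lt_right (lt_min (hγpos _ hmem) ht)

lemma hfun_le_gamma {γ : ℝ → ℝ} (hγpos : ∀ c ∈ Ioc (0 : ℝ) 1, 0 < γ c)
    {t : ℝ} (ht : 0 < t) (ht8 : t < 1/8) : hfun γ t ≤ γ t := by
  have hmin : min t (1/8) = t := min_eq_left ht8.le
  have hmem : t ∈ Ioc (0:ℝ) 1 := ⟨ht, by linarith⟩
  rw [hfun, hmin]
  exact max_le (hγpos _ hmem).le (min_le_left _ _)

lemma hfun_continuous {γ : ℝ → ℝ} (hγcont : ContinuousOn γ (Ioc (0 : ℝ) 1)) :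
    Continuous (hfun γ) := by
  rw [continuous_iff_continuousAt]
  intro t
  rcases lt_trichotomy t 0 with ht | rfl | ht
  · apply ContinuousAt.congr (continuousAt_const (y := (0:ℝ)))
    filter_upwards [Iio_mem_nhds ht] with y hy
    exact (hfun_of_nonpos γ (le_of_lt hy)).symm
  · have : Tendsto (hfun γ) (nhds 0) (nhds 0) := by
      apply squeeze_zero (hfun_nonneg γ) (hfun_le_max γ)
      have : Tendsto (fun t : ℝ => max 0 t) (nhds 0) (nhds (max 0 0)) :=
        ((continuous_const.max continuous_id)).tendsto 0
      simpa using this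
    have h0 : hfun γ 0 = 0 := hfun_of_nonpos γ le_rfl
    rw [ContinuousAt, h0]; exact this
  · have hγq : ContinuousOn (fun y : ℝ => γ (min y (1/8))) (Ioi (0:ℝ)) := by
      apply hγcont.comp ((continuous_id.min continuous_const).continuousOn)
      intro y hy
      exact ⟨lt_min hy (by norm_num), le_trans (min_le_right _ _) (by norm_num)⟩
    have hco : ContinuousOn (hfun γ) (Ioi (0:ℝ)) :=
      continuousOn_const.sup (hγq.inf continuousOn_id)
    exact hco.continuousAt (Ioi_mem_nhds ht)

lemma Gfun_hasDerivAt {γ : ℝ → ℝ} (hγcont : ContinuousOn γ (Ioc (0 : ℝ) 1)) (c : ℝ) :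
    HasDerivAt (Gfun γ) (hfun γ c) c :=
  ((hfun_continuous hγcont).integral_hasStrictDerivAt 0 c).hasDerivAt

lemma Gfun_le_sq {γ : ℝ → ℝ} (hγcont : ContinuousOn γ (Ioc (0 : ℝ) 1))
    {c : ℝ} (hc : 0 ≤ c) : Gfun γ c ≤ c^2 / 2 := by
  have hint : IntervalIntegrable (hfun γ) MeasureTheory.volume 0 c :=
    (hfun_continuous hγcont).intervalIntegrable 0 c
  have hint' : IntervalIntegrable (fun t : ℝ => t) MeasureTheory.volume 0 c :=
    (continuous_id).intervalIntegrable 0 c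
  have : Gfun γ c ≤ ∫ t in (0:ℝ)..c, t := by
    apply intervalIntegral.integral_mono_on hc hint hint'
    intro t ht
    exact le_trans (hfun_le_max γ t) (le_of_eq (max_eq_right ht.1))
  simpa [integral_id] using this

lemma gfun_hasDerivAt {γ : ℝ → ℝ} (hγcont : ContinuousOn γ (Ioc (0 : ℝ) 1)) (c : ℝ) :
    HasDerivAt (gfun γ) (Dgfun γ c) c := by
  have hG := Gfun_hasDerivAt hγcont c
  have hinner : HasDerivAt (fun c : ℝ => 8 * (c - 1/4)) 8 c := by
    have h := ((hasDerivAt_id' c).sub_const (1/4)).const_mul 8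
    rw [mul_one] at h; exact h
  have hS : HasDerivAt (fun c : ℝ => s3 (8 * (c - 1/4)))
      (sd3 (8 * (c - 1/4)) * 8) c :=
    by have h := (hasDerivAt_s3 (8 * (c - 1/4))).comp c hinner; exact h
  have hprod : HasDerivAt (fun c : ℝ => (c - Gfun γ c) * s3 (8 * (c - 1/4)))
      ((1 - hfun γ c) * s3 (8 * (c - 1/4)) + (c - Gfun γ c) * (sd3 (8 * (c - 1/4)) * 8)) c :=
    ((hasDerivAt_id c).sub hG).mul hS
  have := hG.add hprod
  refine this.congr_deriv ?_
  rw [Dgfun]; ring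

lemma deriv_gfun {γ : ℝ → ℝ} (hγcont : ContinuousOn γ (Ioc (0 : ℝ) 1)) :
    deriv (gfun γ) = Dgfun γ :=
  funext fun c => (gfun_hasDerivAt hγcont c).deriv

theorem smoothing_lemma (γ : ℝ → ℝ)
    (hγcont : ContinuousOn γ (Ioc (0 : ℝ) 1))
    (hγmono : MonotoneOn γ (Ioc (0 : ℝ) 1))
    (hγpos : ∀ c ∈ Ioc (0 : ℝ) 1, 0 < γ c)
    (hγlim : Tendsto γ (nhdsWithin 0 (Ioc (0 : ℝ) 1)) (nhds 0)) :
    ∃ g : ℝ → ℝ,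
      ContDiffOn ℝ 1 g (Icc (0 : ℝ) 1) ∧
      (∀ x ∈ Icc (0 : ℝ) 1, g x ∈ Icc (0 : ℝ) 1) ∧
      g 0 = 0 ∧
      deriv g 0 = 0 ∧
      StrictMonoOn g (Icc (0 : ℝ) 1) ∧
      (∀ c ∈ Ioc (0 : ℝ) 1, 0 < deriv g c) ∧
      (∀ c ∈ Ioo (0 : ℝ) (1 / 8), g c ≤ γ c ∧ deriv g c ≤ γ c) ∧
      (∀ c ∈ Icc (1 / 2 : ℝ) 1, g c = c) := by
  have hG0 : Gfun γ 0 = 0 := intervalIntegral.integral_same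
  have hcd : ContDiff ℝ 1 (gfun γ) := by
    rw [contDiff_one_iff_deriv]
    refine ⟨fun c => (gfun_hasDerivAt hγcont c).differentiableAt, ?_⟩
    rw [deriv_gfun hγcont]
    have hGdiff : Differentiable ℝ (Gfun γ) :=
      fun c => (Gfun_hasDerivAt hγcont c).differentiableAt
    have hGcont : Continuous (Gfun γ) := hGdiff.continuous
    have h1 : Continuous fun c : ℝ => s3 (8 * (c - 1/4)) :=
      continuous_s3.comp (by fun_prop)
    have h2 : Continuous fun c : ℝ => sd3 (8 * (c - 1/4)) :=
      continuous_sd3.comp (by fun_prop)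
    unfold Dgfun
    exact ((hfun_continuous hγcont).add
        ((continuous_const.sub (hfun_continuous hγcont)).mul h1)).add
      ((continuous_id.sub hGcont).mul (h2.mul continuous_const))
  have hid : ∀ c : ℝ, (1/2:ℝ) ≤ c → gfun γ c = c := by
    intro c hc
    have h1 : (1:ℝ) ≤ 8 * (c - 1/4) := by linarith
    rw [gfun, s3_of_one_le h1]; ring
  have hg0 : gfun γ 0 = 0 := by
    rw [gfun, hG0, s3_of_nonpos (by norm_num : (8:ℝ) * (0 - 1/4) ≤ 0)]; ring
  have hdpos : ∀ c ∈ Ioc (0 : ℝ) 1, 0 < deriv (gfun γ) c := by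
    intro c hc
    rw [deriv_gfun hγcont]
    unfold Dgfun
    have h1 := hfun_pos hγpos hc.1
    have h2 : hfun γ c ≤ 1 := by
      refine le_trans (hfun_le_max γ c) ?_
      rw [max_eq_right hc.1.le]; exact hc.2
    have h3 := s3_nonneg (8 * (c - 1/4))
    have h5 : Gfun γ c ≤ c^2/2 := Gfun_le_sq hγcont hc.1.le
    have h6 : Gfun γ c < c := by nlinarith [hc.1, hc.2]
    have h7 := mul_nonneg (by linarith : (0:ℝ) ≤ 1 - hfun γ c) h3
    have h8 := mul_nonneg (by linarith : (0:ℝ) ≤ c - Gfun γ c)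
      (by linarith [sd3_nonneg (8 * (c - 1/4))] : (0:ℝ) ≤ sd3 (8 * (c - 1/4)) * 8)
    linarith
  have hsm : StrictMonoOn (gfun γ) (Icc (0:ℝ) 1) := by
    apply strictMonoOn_of_deriv_pos (convex_Icc 0 1) hcd.continuous.continuousOn
    intro x hx
    rw [interior_Icc] at hx
    exact hdpos x ⟨hx.1, hx.2.le⟩
  have hsmall : ∀ c ∈ Ioo (0 : ℝ) (1 / 8), gfun γ c ≤ γ c ∧ deriv (gfun γ) c ≤ γ c := by
    intro c hc
    have hle : (8:ℝ) * (c - 1/4) ≤ 0 := by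
      have := hc.2; linarith
    have hγc := hγpos c ⟨hc.1, by have := hc.2; linarith⟩
    constructor
    · have hgc : gfun γ c = Gfun γ c := by
        rw [gfun, s3_of_nonpos hle]; ring
      rw [hgc]
      have hint : IntervalIntegrable (hfun γ) MeasureTheory.volume 0 c :=
        (hfun_continuous hγcont).intervalIntegrable 0 c
      have hbd : Gfun γ c ≤ ∫ _ in (0:ℝ)..c, γ c := by
        apply intervalIntegral.integral_mono_on hc.1.le hint
          (intervalIntegrable_const)
        intro t ht
        rcases eq_or_lt_of_le ht.1 with h0 | h0
        · rw [← h0, hfun_of_nonpos γ le_rfl]; exact hγc.le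
        · have ht8 : t < 1/8 := lt_of_le_of_lt ht.2 hc.2
          have hmin : min t (1/8) = t := min_eq_left ht8.le
          have hmono : γ t ≤ γ c :=
            hγmono ⟨h0, by linarith⟩ ⟨hc.1, by have := hc.2; linarith⟩ ht.2
          rw [hfun, hmin]
          exact max_le hγc.le (le_trans (min_le_left _ _) hmono)
      rw [intervalIntegral.integral_const] at hbd
      have : (c - 0) • γ c ≤ γ c := by
        rw [smul_eq_mul]
        nlinarith [hc.1, hc.2]
      linarith
    · rw [deriv_gfun hγcont]
      unfold Dgfun
      rw [s3_of_nonpos hle, sd3_of_nonpos hle]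
      have := hfun_le_gamma hγpos hc.1 hc.2
      linarith
  refine ⟨gfun γ, hcd.contDiffOn, ?_, hg0, ?_, hsm, hdpos, hsmall, fun c hc => hid c hc.1⟩
  · intro x hx
    have hg1 : gfun γ 1 = 1 := hid 1 (by norm_num)
    have hmono := hsm.monotoneOn
    constructor
    · have := hmono (left_mem_Icc.2 zero_le_one) hx hx.1
      rwa [hg0] at this
    · have := hmono hx (right_mem_Icc.2 zero_le_one) hx.2
      rwa [hg1] at this
  · rw [deriv_gfun hγcont]
    unfold Dgfun
    rw [hfun_of_nonpos γ le_rfl, hG0,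
      s3_of_nonpos (by norm_num : (8:ℝ) * (0 - 1/4) ≤ 0),
      sd3_of_nonpos (by norm_num : (8:ℝ) * (0 - 1/4) ≤ 0)]
    ring
end

section
/- Let U ⊆ ℝⁿ, K ⊆ U closed, a ∈ K, and d a metric on U. Let φ: U → [0,1] be continuous with φ^{-1}(0) = K, and g: [0,1] → [0,1] with g(0)=0 and g(c) ≤ d(φ^{-1}(c), K)² (the squared distance from the level set to K) for all small c > 0. Then ψ = g ∘ φ satisfies lim_{w→a} ψ(w)/d(w,a) = 0; in particular ψ is differentiable at a with zero derivative (in the direction of the metric). -/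
open Set Filter Topology

theorem psi_little_o_of_dist {X : Type*} [MetricSpace X]
    (K : Set X) (hK : IsClosed K) (hKne : K.Nonempty)
    (φ : X → ℝ) (hφcont : Continuous φ)
    (hφ01 : ∀ w, φ w ∈ Icc (0 : ℝ) 1)
    (hφK : φ ⁻¹' {0} = K)
    (g : ℝ → ℝ) (hg0 : g 0 = 0)
    (hgnonneg : ∀ c ∈ Icc (0 : ℝ) 1, 0 ≤ g c)
    (δ : ℝ) (hδ : 0 < δ)
    (hg : ∀ c ∈ Ioo (0 : ℝ) δ,
      g c ≤ (sInf {d : ℝ | ∃ s ∈ φ ⁻¹' {c}, ∃ k ∈ K, d = dist s k}) ^ 2)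
    (a : X) (ha : a ∈ K) :
    Tendsto (fun w => g (φ w) / dist w a) (nhdsWithin a Kᶜ) (nhds 0) := by
  have hφa : φ a = 0 := by rw [← hφK] at ha; exact ha
  have hmem : {w | φ w < δ} ∈ 𝓝[Kᶜ] a := by
    apply mem_nhdsWithin_of_mem_nhds
    exact (isOpen_lt hφcont continuous_const).mem_nhds (by simpa [hφa] using hδ)
  have key : ∀ w ∈ {w | φ w < δ} ∩ Kᶜ,
      0 ≤ g (φ w) / dist w a ∧ g (φ w) / dist w a ≤ dist w a := by
    rintro w ⟨hwδ, hwK⟩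
    have hwK' : w ∉ K := hwK
    have hcpos : 0 < φ w := by
      rcases (hφ01 w).1.lt_or_eq with h | h
      · exact h
      · exact absurd (by rw [← hφK]; exact h.symm) hwK'
    have hdpos : 0 < dist w a := by
      rw [dist_pos]; rintro rfl; exact hwK' ha
    have hbdd : BddBelow {d : ℝ | ∃ s ∈ φ ⁻¹' {φ w}, ∃ k ∈ K, d = dist s k} := by
      refine ⟨0, ?_⟩
      rintro d ⟨s, _, k, _, rfl⟩
      exact dist_nonneg
    have hmemS : dist w a ∈ {d : ℝ | ∃ s ∈ φ ⁻¹' {φ w}, ∃ k ∈ K, d = dist s k} :=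
      ⟨w, rfl, a, ha, rfl⟩
    have hle : sInf {d : ℝ | ∃ s ∈ φ ⁻¹' {φ w}, ∃ k ∈ K, d = dist s k} ≤ dist w a :=
      csInf_le hbdd hmemS
    have hnn : 0 ≤ sInf {d : ℝ | ∃ s ∈ φ ⁻¹' {φ w}, ∃ k ∈ K, d = dist s k} :=
      le_csInf ⟨_, hmemS⟩ (by rintro d ⟨s, _, k, _, rfl⟩; exact dist_nonneg)
    have hgw : g (φ w) ≤ (dist w a) ^ 2 := by
      calc g (φ w) ≤ (sInf {d : ℝ | ∃ s ∈ φ ⁻¹' {φ w}, ∃ k ∈ K, d = dist s k}) ^ 2 :=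
            hg (φ w) ⟨hcpos, hwδ⟩
        _ ≤ (dist w a) ^ 2 := by
            apply pow_le_pow_left₀ hnn hle
    constructor
    · exact div_nonneg (hgnonneg _ (hφ01 w)) dist_nonneg
    · rw [div_le_iff₀ hdpos]
      calc g (φ w) ≤ (dist w a) ^ 2 := hgw
        _ = dist w a * dist w a := sq (dist w a)
  have h0 : ∀ᶠ w in 𝓝[Kᶜ] a, 0 ≤ g (φ w) / dist w a := by
    filter_upwards [hmem, self_mem_nhdsWithin] with w h1 h2
    exact (key w ⟨h1, h2⟩).1
  have h1 : ∀ᶠ w in 𝓝[Kᶜ] a, g (φ w) / dist w a ≤ dist w a := by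
    filter_upwards [hmem, self_mem_nhdsWithin] with w h1 h2
    exact (key w ⟨h1, h2⟩).2
  have hd : Tendsto (fun w => dist w a) (𝓝[Kᶜ] a) (𝓝 0) := by
    have : Tendsto (fun w => dist w a) (𝓝 a) (𝓝 (dist a a)) :=
      (continuous_id.dist (continuous_const (y := a))).tendsto a
    simpa using this.mono_left nhdsWithin_le_nhds
  exact squeeze_zero' h0 h1 hd
end
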